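/- Let $\mu_R \geq 0$, $\sigma_R > 0$, $q > 0$, and let $c = \left(\sum_{i=1}^{\infty} i^{-(1+q)}\right)^{-1} > 0$. Let $D_1, D_2, \ldots$ be nonnegative random variables (with arbitrary dependence) such that $\mathbb{P}(D_t - \mu_R \geq x) \leq \exp(-x^{2(1+q)}/\sigma_R^2)$ for all $x \geq 0$ and all $t$. Define $\tilde{G} = \sum_{t=1}^{\infty} \mathbb{I}(D_t - \mu_R \geq t)$. Then there exists a constant $C_4$ with $0 < C_4 \leq 2\sigma_R^2 + 1$ such that $\mathbb{P}(\tilde{G} > x) \leq C_4 \exp\left(-\frac{c^2 x^2}{2\sigma_R^2}\right)$ for all $x \geq 0$. -/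

import Mathlib

open MeasureTheory
open scoped ENNReal

set_option maxHeartbeats 1000000 in
theorem stmt_14 {Ω : Type*} [MeasurableSpace Ω] (μ : Measure Ω) [IsProbabilityMeasure μ]
    (μR σR q : ℝ) (hμR : 0 ≤ μR) (hσR : 0 < σR) (hq : 0 < q)
    (c : ℝ) (hc : c = (∑' i : ℕ, (((i : ℝ) + 1) ^ (1 + q))⁻¹)⁻¹)
    (D : ℕ → Ω → ℝ) (hmeas : ∀ t, Measurable (D t)) (hnn : ∀ t ω, 0 ≤ D t ω)
    (htail : ∀ t : ℕ, ∀ x : ℝ, 0 ≤ x →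
      μ {ω | μR + x ≤ D t ω} ≤ ENNReal.ofReal (Real.exp (-x ^ (2 * (1 + q)) / σR ^ 2))) :
    ∃ C₄ : ℝ, 0 < C₄ ∧ C₄ ≤ 2 * σR ^ 2 + 1 ∧
      ∀ x : ℝ, 0 ≤ x →
        μ {ω | ENNReal.ofReal x < ∑' t : ℕ,
            Set.indicator {ω' | μR + ((t : ℝ) + 1) ≤ D (t + 1) ω'} (fun _ => (1 : ℝ≥0∞)) ω}
          ≤ ENNReal.ofReal (C₄ * Real.exp (-(c ^ 2 * x ^ 2) / (2 * σR ^ 2))) := by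
  classical
  have hσ2 : (0:ℝ) < σR ^ 2 := by positivity
  -- the constant c lies in [0, 1]
  have hsum : Summable (fun i : ℕ => (((i : ℝ) + 1) ^ (1 + q))⁻¹) := by
    have h1 : Summable (fun n : ℕ => 1 / (n : ℝ) ^ (1 + q)) :=
      Real.summable_one_div_nat_rpow.2 (by linarith)
    have h2 := (summable_nat_add_iff 1).2 h1
    refine h2.congr fun n => ?_
    push_cast
    rw [one_div]
  have hT1 : (1:ℝ) ≤ ∑' i : ℕ, (((i : ℝ) + 1) ^ (1 + q))⁻¹ := by
    have h0 := Summable.le_tsum hsum 0 (fun j _ => by positivity)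
    simpa [Real.one_rpow] using h0
  have hc0 : 0 ≤ c := by
    rw [hc]; positivity
  have hc1 : c ≤ 1 := by
    rw [hc]
    exact inv_le_one_of_one_le₀ hT1
  -- geometric ratio
  set r : ℝ := Real.exp (-(1 / σR ^ 2)) with hr_def
  have hr0 : 0 ≤ r := (Real.exp_pos _).le
  have hr1 : r < 1 := by
    rw [hr_def, Real.exp_lt_one_iff]
    have : (0:ℝ) < 1 / σR ^ 2 := by positivity
    linarith
  have h1r : (0:ℝ) < 1 - r := by linarith
  -- key bound on (1 - r)⁻¹
  have hgeo : (1 - r)⁻¹ ≤ 1 + σR ^ 2 := by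
    rw [← one_div, div_le_iff₀ h1r]
    have hu := Real.add_one_le_exp (1 / σR ^ 2)
    have hE : r = (Real.exp (1 / σR ^ 2))⁻¹ := by
      rw [hr_def, Real.exp_neg]
    have hEpos : (0:ℝ) < Real.exp (1 / σR ^ 2) := Real.exp_pos _
    rw [hE]
    have hdiv : σR ^ 2 * (1 / σR ^ 2) = 1 := by field_simp
    have key : 1 + σR ^ 2 ≤ σR ^ 2 * Real.exp (1 / σR ^ 2) := by
      nlinarith [mul_le_mul_of_nonneg_left hu hσ2.le]
    have key2 : (1 + σR ^ 2) * (Real.exp (1 / σR ^ 2))⁻¹ ≤ σR ^ 2 := by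
      have h := mul_le_mul_of_nonneg_right key (inv_nonneg.2 hEpos.le)
      rwa [mul_assoc, mul_inv_cancel₀ hEpos.ne', mul_one] at h
    nlinarith [key2]
  refine ⟨1 + σR ^ 2, by positivity, by nlinarith, ?_⟩
  intro x hx
  set N' : ℕ := Nat.floor x with hN'
  -- the bad event is contained in a union of tail events
  set A : ℕ → Set Ω := fun s => {ω | μR + ((s : ℝ) + (N' : ℝ) + 1) ≤ D (s + N' + 1) ω} with hA
  have hsub : {ω | ENNReal.ofReal x < ∑' t : ℕ,
      Set.indicator {ω' | μR + ((t : ℝ) + 1) ≤ D (t + 1) ω'} (fun _ => (1 : ℝ≥0∞)) ω}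
      ⊆ ⋃ s, A s := by
    intro ω hω
    by_contra hnot
    simp only [Set.mem_iUnion, not_exists] at hnot
    have hzero : ∀ t : ℕ, t ∉ Finset.range N' →
        Set.indicator {ω' | μR + ((t : ℝ) + 1) ≤ D (t + 1) ω'} (fun _ => (1 : ℝ≥0∞)) ω = 0 := by
      intro t ht
      rw [Finset.mem_range, not_lt] at ht
      apply Set.indicator_of_notMem
      have := hnot (t - N')
      rw [hA] at this
      simp only [Set.mem_setOf_eq] at this ⊢
      have hts : t - N' + N' = t := Nat.sub_add_cancel ht
      intro hmem
      apply this
      rw [hts]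
      have hcast : ((t - N' : ℕ) : ℝ) + (N' : ℝ) + 1 = (t : ℝ) + 1 := by
        have : ((t - N' : ℕ) : ℝ) + (N' : ℝ) = ((t - N' + N' : ℕ) : ℝ) := by push_cast; ring
        rw [this, hts]
      rw [hcast]
      exact hmem
    have hS : (∑' t : ℕ,
        Set.indicator {ω' | μR + ((t : ℝ) + 1) ≤ D (t + 1) ω'} (fun _ => (1 : ℝ≥0∞)) ω)
        ≤ (N' : ℝ≥0∞) := by
      rw [tsum_eq_sum hzero]
      calc (∑ t ∈ Finset.range N',
            Set.indicator {ω' | μR + ((t : ℝ) + 1) ≤ D (t + 1) ω'} (fun _ => (1 : ℝ≥0∞)) ω)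
          ≤ ∑ _t ∈ Finset.range N', (1 : ℝ≥0∞) := by
            refine Finset.sum_le_sum fun t _ => ?_
            classical
            by_cases h : ω ∈ {ω' | μR + ((t : ℝ) + 1) ≤ D (t + 1) ω'}
            · rw [Set.indicator_of_mem h]
            · rw [Set.indicator_of_notMem h]; exact zero_le
        _ = (N' : ℝ≥0∞) := by simp
    have hxN : (N' : ℝ≥0∞) ≤ ENNReal.ofReal x := by
      rw [← ENNReal.ofReal_natCast]
      exact ENNReal.ofReal_le_ofReal (Nat.floor_le hx)
    exact absurd (lt_of_lt_of_le hω (le_trans hS hxN)) (lt_irrefl _)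
  -- bound each tail probability
  have hAle : ∀ s : ℕ, μ (A s) ≤
      ENNReal.ofReal (Real.exp (-((s : ℝ) + (N' : ℝ) + 1) ^ (2 * (1 + q)) / σR ^ 2)) := by
    intro s
    have := htail (s + N' + 1) ((s : ℝ) + (N' : ℝ) + 1) (by positivity)
    exact this
  -- pointwise geometric domination
  have hfg : ∀ s : ℕ, Real.exp (-((s : ℝ) + (N' : ℝ) + 1) ^ (2 * (1 + q)) / σR ^ 2)
      ≤ Real.exp (-((N' : ℝ) + 1) ^ 2 / σR ^ 2) * r ^ s := by
    intro s
    set a : ℝ := (s : ℝ) + (N' : ℝ) + 1 with ha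
    have ha1 : (1:ℝ) ≤ a := by
      have h1 : (0:ℝ) ≤ (s : ℝ) := Nat.cast_nonneg s
      have h2 : (0:ℝ) ≤ (N' : ℝ) := Nat.cast_nonneg N'
      rw [ha]; linarith
    have hrp : a ^ (2:ℝ) ≤ a ^ (2 * (1 + q)) :=
      Real.rpow_le_rpow_of_exponent_le ha1 (by linarith)
    have hrp2 : a ^ (2:ℝ) = a ^ (2:ℕ) := by
      rw [← Real.rpow_natCast a 2]; norm_num
    have hsq : ((N' : ℝ) + 1) ^ 2 + (s : ℝ) ≤ a ^ (2:ℕ) := by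
      have h1 : (0:ℝ) ≤ (s : ℝ) := Nat.cast_nonneg s
      have h2 : (0:ℝ) ≤ (N' : ℝ) := Nat.cast_nonneg N'
      rw [ha]; nlinarith
    have hkey : ((N' : ℝ) + 1) ^ 2 + (s : ℝ) ≤ a ^ (2 * (1 + q)) := by
      calc ((N' : ℝ) + 1) ^ 2 + (s : ℝ) ≤ a ^ (2:ℕ) := hsq
        _ = a ^ (2:ℝ) := hrp2.symm
        _ ≤ a ^ (2 * (1 + q)) := hrp
    have hstep : Real.exp (-a ^ (2 * (1 + q)) / σR ^ 2)
        ≤ Real.exp (-(((N' : ℝ) + 1) ^ 2 + (s : ℝ)) / σR ^ 2) := by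
      apply Real.exp_le_exp.2
      have hnum : -a ^ (2 * (1 + q)) ≤ -(((N' : ℝ) + 1) ^ 2 + (s : ℝ)) := neg_le_neg hkey
      rw [div_eq_mul_inv, div_eq_mul_inv]
      exact mul_le_mul_of_nonneg_right hnum (inv_nonneg.2 hσ2.le)
    refine hstep.trans ?_
    have : Real.exp (-(((N' : ℝ) + 1) ^ 2 + (s : ℝ)) / σR ^ 2)
        = Real.exp (-((N' : ℝ) + 1) ^ 2 / σR ^ 2) * r ^ s := by
      rw [hr_def, ← Real.exp_nat_mul, ← Real.exp_add]
      congr 1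
      field_simp
      ring
    rw [this]
  -- summability
  have hg_summable : Summable (fun s : ℕ =>
      Real.exp (-((N' : ℝ) + 1) ^ 2 / σR ^ 2) * r ^ s) :=
    (summable_geometric_of_lt_one hr0 hr1).mul_left _
  have hf_nonneg : ∀ s : ℕ,
      (0:ℝ) ≤ Real.exp (-((s : ℝ) + (N' : ℝ) + 1) ^ (2 * (1 + q)) / σR ^ 2) :=
    fun s => (Real.exp_pos _).le
  have hf_summable : Summable (fun s : ℕ =>
      Real.exp (-((s : ℝ) + (N' : ℝ) + 1) ^ (2 * (1 + q)) / σR ^ 2)) :=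
    Summable.of_nonneg_of_le hf_nonneg hfg hg_summable
  -- sum up
  calc μ {ω | ENNReal.ofReal x < ∑' t : ℕ,
        Set.indicator {ω' | μR + ((t : ℝ) + 1) ≤ D (t + 1) ω'} (fun _ => (1 : ℝ≥0∞)) ω}
      ≤ μ (⋃ s, A s) := measure_mono hsub
    _ ≤ ∑' s : ℕ, μ (A s) := measure_iUnion_le A
    _ ≤ ∑' s : ℕ, ENNReal.ofReal (Real.exp (-((s : ℝ) + (N' : ℝ) + 1) ^ (2 * (1 + q)) / σR ^ 2)) :=
        ENNReal.tsum_le_tsum hAle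
    _ = ENNReal.ofReal (∑' s : ℕ, Real.exp (-((s : ℝ) + (N' : ℝ) + 1) ^ (2 * (1 + q)) / σR ^ 2)) :=
        (ENNReal.ofReal_tsum_of_nonneg hf_nonneg hf_summable).symm
    _ ≤ ENNReal.ofReal ((1 + σR ^ 2) * Real.exp (-(c ^ 2 * x ^ 2) / (2 * σR ^ 2))) := by
        apply ENNReal.ofReal_le_ofReal
        have hsum_le : (∑' s : ℕ, Real.exp (-((s : ℝ) + (N' : ℝ) + 1) ^ (2 * (1 + q)) / σR ^ 2))
            ≤ Real.exp (-((N' : ℝ) + 1) ^ 2 / σR ^ 2) * (1 - r)⁻¹ := by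
          have := Summable.tsum_le_tsum hfg hf_summable hg_summable
          rw [tsum_mul_left, tsum_geometric_of_lt_one hr0 hr1] at this
          exact this
        refine hsum_le.trans ?_
        have hexp_le : Real.exp (-((N' : ℝ) + 1) ^ 2 / σR ^ 2)
            ≤ Real.exp (-(c ^ 2 * x ^ 2) / (2 * σR ^ 2)) := by
          apply Real.exp_le_exp.2
          rw [div_le_div_iff₀ hσ2 (by positivity)]
          have hxN : x ≤ (N' : ℝ) + 1 := (Nat.lt_floor_add_one x).le
          have hc2 : c ^ 2 ≤ 1 := by nlinarith
          have hx2 : x ^ 2 ≤ ((N' : ℝ) + 1) ^ 2 := by nlinarith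
          have h3 : c ^ 2 * x ^ 2 ≤ ((N' : ℝ) + 1) ^ 2 := by nlinarith [sq_nonneg x, sq_nonneg c]
          nlinarith [mul_le_mul_of_nonneg_right h3 hσ2.le,
            mul_nonneg (sq_nonneg ((N' : ℝ) + 1)) hσ2.le]
        calc Real.exp (-((N' : ℝ) + 1) ^ 2 / σR ^ 2) * (1 - r)⁻¹
            ≤ Real.exp (-(c ^ 2 * x ^ 2) / (2 * σR ^ 2)) * (1 + σR ^ 2) := by
              apply mul_le_mul hexp_le hgeo (by positivity) (Real.exp_pos _).le
          _ = (1 + σR ^ 2) * Real.exp (-(c ^ 2 * x ^ 2) / (2 * σR ^ 2)) := by ring
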